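/- arXiv:2402.03076 — 2 statements merged into one kernel-verified Lean document; each statement's English description precedes it below -/
import Mathlib

section
/- Let A, B ⊆ ℕ, let q be a natural number, and let L, M, N be unions of arithmetic progressions modulo q with N ⊆ L + M (sumset). For sets C, D ⊆ ℕ and integers a < b, write (C)ₐᵇ = C ∩ (a, b], |C|ₐᵇ for its cardinality, and ⟨C ∧ L⟩ₐᵇ = min over residue classes P of L of |C ∩ P|ₐᵇ. Let Υ(C, D; N) denote the number of quadruples (c₁, c₂, d₁, d₂) with c₁, c₂ ∈ (C)_{2N}^{3N}, d₁, d₂ ∈ (D)₀^N and c₁ − d₁ = c₂ − d₂. Then for every natural number N: (⟨B ∧ L⟩₀^N · |complement(A+B) ∩ N|_{2N}^{3N})² ≤ q · |complement(A) ∩ M|_N^{3N} · Υ(complement(A+B) ∩ N, B ∩ L; N). -/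
open scoped Classical Pointwise

/-- `L` is a union of arithmetic progressions modulo `q`. -/
def APUnion (q : ℕ) (L : Set ℕ) : Prop :=
  ∀ m n : ℕ, m % q = n % q → (m ∈ L ↔ n ∈ L)

/-- `|C|_a^b`: the number of elements of `C` in the interval `(a, b]`. -/
noncomputable def cnt (C : Set ℕ) (a b : ℕ) : ℕ :=
  ((Finset.Ioc a b).filter (fun n => n ∈ C)).card

/-- `⟨C ∧ L⟩_a^b`: the minimum over the residue classes constituting `L` of the number of
elements of `C` in that class and in `(a, b]`. -/
noncomputable def minCnt (q : ℕ) (L C : Set ℕ) (a b : ℕ) : ℕ :=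
  sInf ((fun l => cnt (C ∩ {n | n % q = l}) a b) '' {l | l < q ∧ l ∈ L})

/-- `Υ(C, D; N)`: the number of quadruples `(c₁, c₂, d₁, d₂)` with
`c₁, c₂ ∈ C ∩ (2N, 3N]`, `d₁, d₂ ∈ D ∩ (0, N]` and `c₁ - d₁ = c₂ - d₂`. -/
noncomputable def ups (C D : Set ℕ) (N : ℕ) : ℕ :=
  (((Finset.Ioc (2 * N) (3 * N) ×ˢ Finset.Ioc (2 * N) (3 * N)) ×ˢ
      (Finset.Ioc 0 N ×ˢ Finset.Ioc 0 N)).filter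
    (fun t => t.1.1 ∈ C ∧ t.1.2 ∈ C ∧ t.2.1 ∈ D ∧ t.2.2 ∈ D ∧
      (t.1.1 : ℤ) - (t.2.1 : ℤ) = (t.1.2 : ℤ) - (t.2.2 : ℤ))).card

/-- Theorem 2.1 of Kawada and Wooley. -/
theorem kawada_wooley_2_1 (A B : Set ℕ) (q : ℕ) (L M 𝒩 : Set ℕ)
    (hL : APUnion q L) (hM : APUnion q M) (h𝒩 : APUnion q 𝒩)
    (hsub : 𝒩 ⊆ L + M) (N : ℕ) :
    (minCnt q L B 0 N * cnt ((A + B)ᶜ ∩ 𝒩) (2 * N) (3 * N)) ^ 2 ≤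
      q * cnt (Aᶜ ∩ M) N (3 * N) * ups ((A + B)ᶜ ∩ 𝒩) (B ∩ L) N := by
  set μ := minCnt q L B 0 N with hμ
  rcases Nat.eq_zero_or_pos μ with h0 | hpos
  · simp [h0]
  -- μ > 0 forces the indexing set nonempty, hence q ≥ 1
  have hq : 1 ≤ q := by
    by_contra hq
    push_neg at hq
    interval_cases q
    have : ({l | l < 0 ∧ l ∈ L} : Set ℕ) = ∅ := by
      ext l; simp
    rw [hμ, minCnt, this] at hpos
    simp at hpos
  -- choice of decomposition for elements of 𝒩
  have hchoice : ∀ n, n ∈ 𝒩 → ∃ l m : ℕ, l ∈ L ∧ m ∈ M ∧ l + m = n := by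
    intro n hn
    rcases Set.mem_add.1 (hsub hn) with ⟨l, hl, m, hm, hlm⟩
    exact ⟨l, m, hl, hm, hlm⟩
  choose! ℓ mm hℓL hmM hℓm using hchoice
  set C : Set ℕ := (A + B)ᶜ ∩ 𝒩 with hC
  set Cf : Finset ℕ := (Finset.Ioc (2 * N) (3 * N)).filter (fun n => n ∈ C) with hCf
  set P : Finset (ℕ × ℕ) :=
    (Finset.Ioc (2 * N) (3 * N) ×ˢ Finset.Ioc 0 N).filter
      (fun p => p.1 ∈ C ∧ p.2 ∈ B ∧ p.2 % q = ℓ p.1 % q) with hP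
  -- Step A : μ * Cf.card ≤ P.card
  have stepA : μ * Cf.card ≤ P.card := by
    have hcard : P.card = ∑ n ∈ Cf, ((Finset.Ioc 0 N).filter
        (fun b => b ∈ B ∧ b % q = ℓ n % q)).card := by
      rw [Finset.card_eq_sum_card_fiberwise (f := Prod.fst) (t := Cf)]
      · refine Finset.sum_congr rfl fun n hn => ?_
        apply Finset.card_bij (fun p _ => p.2)
        · intro p hp
          obtain ⟨hpP, hp1⟩ := Finset.mem_filter.1 hp
          obtain ⟨hpprod, hCmem, hBmem, hqmem⟩ := Finset.mem_filter.1 hpP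
          obtain ⟨_, hb⟩ := Finset.mem_product.1 hpprod
          refine Finset.mem_filter.2 ⟨hb, hBmem, ?_⟩
          rw [hqmem, hp1]
        · intro p hp p' hp' hpp
          have h1 := (Finset.mem_filter.1 hp).2
          have h2 := (Finset.mem_filter.1 hp').2
          exact Prod.ext (h1.trans h2.symm) hpp
        · intro b hb
          obtain ⟨hbIoc, hbB, hbq⟩ := Finset.mem_filter.1 hb
          obtain ⟨hnIoc, hnC⟩ := Finset.mem_filter.1 hn
          refine ⟨(n, b), Finset.mem_filter.2 ⟨Finset.mem_filter.2
            ⟨Finset.mem_product.2 ⟨hnIoc, hbIoc⟩, hnC, hbB, hbq⟩, rfl⟩, rfl⟩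
      · intro p hp
        obtain ⟨hpprod, hCmem, _⟩ := Finset.mem_filter.1 hp
        exact Finset.mem_filter.2 ⟨(Finset.mem_product.1 hpprod).1, hCmem⟩
    rw [hcard, mul_comm, ← smul_eq_mul]
    refine Finset.card_nsmul_le_sum _ _ _ fun n hn => ?_
    have hnC : n ∈ C := (Finset.mem_filter.1 hn).2
    have hn𝒩 : n ∈ 𝒩 := hnC.2
    have hres : ℓ n % q ∈ {l | l < q ∧ l ∈ L} := by
      refine ⟨Nat.mod_lt _ hq, ?_⟩
      exact (hL (ℓ n % q) (ℓ n) (Nat.mod_mod_of_dvd _ dvd_rfl)).2 (hℓL n hn𝒩)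
    have := Nat.sInf_le (Set.mem_image_of_mem
      (fun l => cnt (B ∩ {n | n % q = l}) 0 N) hres)
    refine le_trans this (le_of_eq ?_)
    simp only [cnt]
    refine congrArg Finset.card ?_
    ext b
    simp [Set.mem_inter_iff, Set.mem_setOf_eq, and_assoc]
  -- the target set for differences
  set X : Finset ℕ := (Finset.Ioc N (3 * N)).filter (fun n => n ∈ Aᶜ ∩ M) with hX
  have hmaps : ∀ p ∈ P, p.1 - p.2 ∈ X := by
    intro p hp
    simp only [hP, Finset.mem_filter, Finset.mem_product, Finset.mem_Ioc] at hp
    obtain ⟨⟨⟨hn1, hn2⟩, hb1, hb2⟩, hnC, hbB, hbq⟩ := hp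
    have hble : p.2 ≤ p.1 := le_trans hb2 (le_trans (by omega) hn1.le)
    have hsub' : p.1 - p.2 + p.2 = p.1 := Nat.sub_add_cancel hble
    simp only [hX, Finset.mem_filter, Finset.mem_Ioc, Set.mem_inter_iff, Set.mem_compl_iff]
    refine ⟨⟨by omega, by omega⟩, ?_, ?_⟩
    · intro hA
      exact hnC.1 (by rw [← hsub']; exact Set.add_mem_add hA hbB)
    · -- p.1 - p.2 ∈ M
      have hn𝒩 : p.1 ∈ 𝒩 := hnC.2
      have hdecomp : ℓ p.1 + mm p.1 = p.1 := hℓm p.1 hn𝒩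
      have hbq' : Nat.ModEq q p.2 (ℓ p.1) := hbq
      have h1 : Nat.ModEq q (p.1 - p.2 + p.2) (mm p.1 + p.2) := by
        calc (p.1 - p.2 + p.2) = ℓ p.1 + mm p.1 := by rw [hsub']; exact hdecomp.symm
          _ = mm p.1 + ℓ p.1 := Nat.add_comm _ _
          _ ≡ mm p.1 + p.2 [MOD q] := Nat.ModEq.add_left _ hbq'.symm
      have hmod : (p.1 - p.2) % q = mm p.1 % q := Nat.ModEq.add_right_cancel' p.2 h1
      exact (hM _ _ hmod).2 (hmM p.1 hn𝒩)
  -- fiber counts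
  set r : ℕ → ℕ := fun x => (P.filter (fun p => p.1 - p.2 = x)).card with hr
  have stepC : P.card = ∑ x ∈ X, r x :=
    Finset.card_eq_sum_card_fiberwise hmaps
  -- Cauchy-Schwarz
  have stepD : (∑ x ∈ X, r x) ^ 2 ≤ X.card * ∑ x ∈ X, r x ^ 2 :=
    sq_sum_le_card_mul_sum_sq
  -- Step E : ∑ r² ≤ ups
  set Q : Finset ((ℕ × ℕ) × (ℕ × ℕ)) :=
    (P ×ˢ P).filter (fun pp => pp.1.1 - pp.1.2 = pp.2.1 - pp.2.2) with hQ
  have stepE1 : ∑ x ∈ X, r x ^ 2 = Q.card := by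
    rw [Finset.card_eq_sum_card_fiberwise (f := fun pp => pp.1.1 - pp.1.2) (t := X)
      (fun pp hpp => hmaps _ (Finset.mem_product.1 (Finset.mem_filter.1 hpp).1).1)]
    refine Finset.sum_congr rfl fun x hx => ?_
    have hfil : Q.filter (fun pp => pp.1.1 - pp.1.2 = x)
        = (P.filter (fun p => p.1 - p.2 = x)) ×ˢ (P.filter (fun p => p.1 - p.2 = x)) := by
      ext pp
      constructor
      · intro h
        obtain ⟨hQm, hx1⟩ := Finset.mem_filter.1 h
        obtain ⟨hPP, heq⟩ := Finset.mem_filter.1 hQm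
        obtain ⟨h1, h2⟩ := Finset.mem_product.1 hPP
        exact Finset.mem_product.2 ⟨Finset.mem_filter.2 ⟨h1, hx1⟩,
          Finset.mem_filter.2 ⟨h2, by omega⟩⟩
      · intro h
        obtain ⟨h1, h2⟩ := Finset.mem_product.1 h
        obtain ⟨h1P, h1x⟩ := Finset.mem_filter.1 h1
        obtain ⟨h2P, h2x⟩ := Finset.mem_filter.1 h2
        exact Finset.mem_filter.2 ⟨Finset.mem_filter.2
          ⟨Finset.mem_product.2 ⟨h1P, h2P⟩, by omega⟩, h1x⟩
    refine (Eq.trans (congrArg Finset.card hfil) ?_).symm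
    rw [Finset.card_product, sq]
  have stepE2 : Q.card ≤ ups C (B ∩ L) N := by
    unfold ups
    apply Finset.card_le_card_of_injOn
      (fun pp => ((pp.1.1, pp.2.1), (pp.1.2, pp.2.2)))
    · intro pp hpp
      obtain ⟨hppPP, heq⟩ := Finset.mem_filter.1 hpp
      obtain ⟨hp1P, hp2P⟩ := Finset.mem_product.1 hppPP
      obtain ⟨hp1prod, hC1, hB1, hq1⟩ := Finset.mem_filter.1 hp1P
      obtain ⟨hp2prod, hC2, hB2, hq2⟩ := Finset.mem_filter.1 hp2P
      obtain ⟨hn1', hb1'⟩ := Finset.mem_product.1 hp1prod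
      obtain ⟨hn2', hb2'⟩ := Finset.mem_product.1 hp2prod
      have hn1 := Finset.mem_Ioc.1 hn1'
      have hn2 := Finset.mem_Ioc.1 hn2'
      have hb1 := Finset.mem_Ioc.1 hb1'
      have hb2 := Finset.mem_Ioc.1 hb2'
      have hbL1 : pp.1.2 ∈ L :=
        (hL _ _ hq1).2 (hℓL _ hC1.2)
      have hbL2 : pp.2.2 ∈ L :=
        (hL _ _ hq2).2 (hℓL _ hC2.2)
      simp only [Finset.mem_coe, Finset.mem_filter, Finset.mem_product]
      refine ⟨⟨⟨hn1', hn2'⟩, hb1', hb2'⟩, hC1, hC2, ⟨hB1, hbL1⟩, ⟨hB2, hbL2⟩, ?_⟩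
      have l1 : pp.1.2 ≤ pp.1.1 := by omega
      have l2 : pp.2.2 ≤ pp.2.1 := by omega
      have := congrArg (fun n : ℕ => (n : ℤ)) heq
      push_cast [Nat.cast_sub l1, Nat.cast_sub l2] at this
      exact this
    · intro pp _ pp' _ h
      simp only [Prod.mk.injEq] at h
      exact Prod.ext (Prod.ext h.1.1 h.2.1) (Prod.ext h.1.2 h.2.2)
  -- combine
  have key : (μ * Cf.card) ^ 2 ≤ X.card * ups C (B ∩ L) N := by
    calc (μ * Cf.card) ^ 2 ≤ P.card ^ 2 := Nat.pow_le_pow_left stepA 2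
      _ = (∑ x ∈ X, r x) ^ 2 := by rw [stepC]
      _ ≤ X.card * ∑ x ∈ X, r x ^ 2 := stepD
      _ = X.card * Q.card := by rw [stepE1]
      _ ≤ X.card * ups C (B ∩ L) N := Nat.mul_le_mul_left _ stepE2
  have hXcnt : X.card = cnt (Aᶜ ∩ M) N (3 * N) := by
    unfold cnt; congr 1; rw [hX]; ext a; simp [Finset.mem_filter]
  have hCfcnt : Cf.card = cnt C (2 * N) (3 * N) := by
    unfold cnt; congr 1; rw [hCf]; ext a; simp [Finset.mem_filter]
  calc (μ * cnt C (2 * N) (3 * N)) ^ 2 = (μ * Cf.card) ^ 2 := by rw [hCfcnt]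
    _ ≤ X.card * ups C (B ∩ L) N := key
    _ = 1 * cnt (Aᶜ ∩ M) N (3 * N) * ups C (B ∩ L) N := by rw [hXcnt, one_mul]
    _ ≤ q * cnt (Aᶜ ∩ M) N (3 * N) * ups C (B ∩ L) N := by
        exact Nat.mul_le_mul_right _ (Nat.mul_le_mul_right _ hq)
end

section
/- Assume the set E₃ of odd n not representable as p² + p₁⁵ + ⋯ + p₁₆⁵ (primes) satisfies |E₃ ∩ [1,N]| ≪ N^{1/5 − 27/3200 + ε}. Then the set E of even n not representable as p² + p₁⁵ + ⋯ + p₁₇⁵ (primes) satisfies |E ∩ (2N, 3N]| ≪ N^{−27/3200 + ε} for every ε > 0, and hence E is finite. -/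
open scoped Classical

/-- `n` is a sum of one square of a prime and sixteen fifth powers of primes. -/
def RepSq16 (n : ℕ) : Prop :=
  ∃ (p : ℕ) (f : Fin 16 → ℕ), p.Prime ∧ (∀ i, (f i).Prime) ∧ n = p ^ 2 + ∑ i, (f i) ^ 5

/-- `n` is a sum of one square of a prime and seventeen fifth powers of primes. -/
def RepSq17 (n : ℕ) : Prop :=
  ∃ (p : ℕ) (f : Fin 17 → ℕ), p.Prime ∧ (∀ i, (f i).Prime) ∧ n = p ^ 2 + ∑ i, (f i) ^ 5

section Aux
open Finset Nat Filter


lemma cb_le (n : ℕ) (hn : 1 ≤ n) :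
    Nat.centralBinom n ≤ (2*n)^(Nat.primeCounting (2*n)) := by
  have h2n : 0 < 2*n := by omega
  calc Nat.centralBinom n
      = ∏ p ∈ (Nat.centralBinom n).factorization.support,
          p ^ ((Nat.centralBinom n).factorization p) := by
        conv_lhs => rw [← Nat.factorization_prod_pow_eq_self (Nat.centralBinom_ne_zero n)]
        rfl
    _ ≤ ∏ _p ∈ (Nat.centralBinom n).factorization.support, (2*n) := by
        apply Finset.prod_le_prod
        · intro i _; positivity
        · intro p _
          exact Nat.pow_factorization_choose_le h2n
    _ = (2*n)^((Nat.centralBinom n).factorization.support.card) := by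
        rw [Finset.prod_const]
    _ ≤ (2*n)^(Nat.primeCounting (2*n)) := by
        apply Nat.pow_le_pow_right h2n
        have hsub : (Nat.centralBinom n).factorization.support ⊆ Nat.primesBelow (2*n+1) := by
          intro p hp
          have hp' : p ∈ (Nat.centralBinom n).primeFactors := by
            rwa [← Nat.support_factorization]
          have hpp : p.Prime := Nat.prime_of_mem_primeFactors hp'
          have ha : (Nat.centralBinom n).factorization p ≠ 0 :=
            Finsupp.mem_support_iff.mp hp
          have hple : p ≤ 2*n := by
            have h1 : p ^ 1 ≤ p ^ ((Nat.centralBinom n).factorization p) :=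
              Nat.pow_le_pow_right hpp.pos (by omega)
            have h2 : p ^ ((Nat.centralBinom n).factorization p) ≤ 2*n :=
              Nat.pow_factorization_choose_le h2n
            simpa using h1.trans h2
          exact Nat.mem_primesBelow.mpr ⟨by omega, hpp⟩
        calc (Nat.centralBinom n).factorization.support.card
            ≤ (Nat.primesBelow (2*n+1)).card := Finset.card_le_card hsub
          _ = Nat.primeCounting' (2*n+1) := Nat.primesBelow_card_eq_primeCounting' _
          _ = Nat.primeCounting (2*n) := rfl

lemma l1 (n : ℕ) (hn : 1 ≤ n) :
    (4:ℕ)^n ≤ (2*n)^(Nat.primeCounting (2*n) + 1) := by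
  rcases lt_or_ge n 4 with h4 | h4
  · interval_cases n <;> decide
  · have h1 : 4^n < n * Nat.centralBinom n := Nat.four_pow_lt_mul_centralBinom n h4
    have h2 := cb_le n hn
    calc (4:ℕ)^n ≤ n * Nat.centralBinom n := h1.le
      _ ≤ (2*n) * (2*n)^(Nat.primeCounting (2*n)) := by
          apply Nat.mul_le_mul (by omega) h2
      _ = (2*n)^(Nat.primeCounting (2*n) + 1) := by ring



lemma key (x : ℕ) (hx : 2 ≤ x) :
    (x:ℝ) / (4 * Real.log x) ≤ (Nat.primeCounting x : ℝ) + 1 := by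
  set n := x / 2 with hn
  have hn1 : 1 ≤ n := by omega
  have h2n : 2*n ≤ x := by omega
  have hx4 : x ≤ 4*n := by omega
  have hcast : (4:ℝ)^n ≤ ((2*n : ℕ):ℝ)^(Nat.primeCounting (2*n) + 1) := by
    exact_mod_cast l1 n hn1
  have hlog : (n:ℝ) * Real.log 4 ≤ ((Nat.primeCounting (2*n) : ℝ) + 1) * Real.log (2*(n:ℝ)) := by
    have h := Real.log_le_log (by positivity) hcast
    rw [Real.log_pow, Real.log_pow] at h
    push_cast at h
    convert h using 2 <;> push_cast <;> ring
  have hlog2n : Real.log (2*(n:ℝ)) ≤ Real.log x := by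
    apply Real.log_le_log (by positivity)
    exact_mod_cast h2n
  have hlog2n0 : 0 ≤ Real.log (2*(n:ℝ)) := by
    apply Real.log_nonneg
    have : (1:ℝ) ≤ n := by exact_mod_cast hn1
    linarith
  have hmono : Nat.primeCounting (2*n) ≤ Nat.primeCounting x :=
    Nat.monotone_primeCounting h2n
  have hstep : (n:ℝ) * Real.log 4 ≤ ((Nat.primeCounting x : ℝ) + 1) * Real.log x := by
    calc (n:ℝ) * Real.log 4 ≤ ((Nat.primeCounting (2*n) : ℝ) + 1) * Real.log (2*(n:ℝ)) := hlog
      _ ≤ ((Nat.primeCounting x : ℝ) + 1) * Real.log x := by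
          apply mul_le_mul _ hlog2n hlog2n0 (by positivity)
          have : (Nat.primeCounting (2*n) : ℝ) ≤ Nat.primeCounting x := by exact_mod_cast hmono
          push_cast
          linarith
  have hlog4 : (1:ℝ) ≤ Real.log 4 := by
    rw [Real.le_log_iff_exp_le (by norm_num)]
    calc Real.exp 1 ≤ 2.7182818286 := Real.exp_one_lt_d9.le
      _ ≤ 4 := by norm_num
  have hxn : (x:ℝ)/4 ≤ (n:ℝ) := by
    have : (x:ℝ) ≤ 4*n := by exact_mod_cast hx4
    linarith
  have hx4' : (x:ℝ)/4 ≤ ((Nat.primeCounting x : ℝ) + 1) * Real.log x := by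
    calc (x:ℝ)/4 ≤ (n:ℝ) := hxn
      _ ≤ (n:ℝ) * Real.log 4 := by nlinarith [Nat.cast_nonneg (α := ℝ) n]
      _ ≤ _ := hstep
  have hlogx : 0 < Real.log x := by
    apply Real.log_pos
    exact_mod_cast hx
  rw [div_le_iff₀ (by positivity)]
  nlinarith

lemma cheb (η : ℝ) (hη : 0 < η) (hη1 : η ≤ 1) :
    ∃ x₀ : ℕ, 2 ≤ x₀ ∧ ∀ x : ℕ, x₀ ≤ x → (x:ℝ)^(1 - η) ≤ (Nat.primeCounting x : ℝ) := by
  have hlo := (isLittleO_log_rpow_atTop hη).def (by norm_num : (0:ℝ) < 1/8)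
  rw [Filter.eventually_atTop] at hlo
  obtain ⟨x₁, hx₁⟩ := hlo
  refine ⟨max 2 ⌈x₁⌉₊, le_max_left _ _, ?_⟩
  intro x hx
  have hx2 : 2 ≤ x := le_trans (le_max_left _ _) hx
  have hxr : (2:ℝ) ≤ x := by exact_mod_cast hx2
  have hx1r : x₁ ≤ (x:ℝ) := by
    calc x₁ ≤ ⌈x₁⌉₊ := Nat.le_ceil x₁
      _ ≤ (x:ℝ) := by exact_mod_cast le_trans (le_max_right _ _) hx
  have hlogle : Real.log x ≤ (x:ℝ)^η / 8 := by
    have h := hx₁ x hx1r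
    rw [Real.norm_eq_abs, Real.norm_eq_abs, abs_of_nonneg (Real.log_nonneg (by linarith)),
      abs_of_nonneg (Real.rpow_nonneg (by positivity) _)] at h
    linarith
  have hlogpos : 0 < Real.log x := Real.log_pos (by linarith)
  have hkey := key x hx2
  have hdiv : 2 * (x:ℝ)^(1-η) ≤ (x:ℝ) / (4 * Real.log x) := by
    have h1 : 4 * Real.log x ≤ (x:ℝ)^η / 2 := by linarith
    have h2 : (x:ℝ) / ((x:ℝ)^η / 2) ≤ (x:ℝ) / (4 * Real.log x) :=
      div_le_div_of_nonneg_left (by positivity) (by positivity) h1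
    have h3 : (x:ℝ) / ((x:ℝ)^η / 2) = 2 * (x:ℝ)^(1-η) := by
      rw [Real.rpow_sub (by linarith), Real.rpow_one]
      field_simp
    linarith [h3 ▸ h2]
  have hone : (1:ℝ) ≤ (x:ℝ)^(1-η) := by
    calc (1:ℝ) = (x:ℝ)^(0:ℝ) := (Real.rpow_zero _).symm
      _ ≤ (x:ℝ)^(1-η) := Real.rpow_le_rpow_of_exponent_le (by linarith) (by linarith)
  linarith

def Sfin (N : ℕ) : Finset ℕ :=
  (Finset.range (2*N+1)).filter (fun q => q.Prime ∧ q % 2 = 1 ∧ q^5 ≤ 2*N)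

lemma transfer (N n : ℕ) (hn : n ∈ Finset.Ioc (2*N) (3*N)) (hpar : n % 2 = 0)
    (hrep : ¬RepSq17 n) :
    (Sfin N).card ≤
      ((Finset.Icc 1 (3*N)).filter (fun m => m % 2 = 1 ∧ ¬RepSq16 m)).card := by
  rw [Finset.mem_Ioc] at hn
  apply Finset.card_le_card_of_injOn (fun q => n - q^5)
  · intro q hq
    simp only [Finset.mem_coe, Sfin, Finset.mem_filter, Finset.mem_range] at hq
    obtain ⟨hqr, hqp, hqodd, hq5⟩ := hq
    have hq5odd : q^5 % 2 = 1 := by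
      have := Nat.pow_mod q 5 2
      rw [hqodd] at this
      simpa using this
    have hq5lt : q^5 < n := by omega
    simp only [Finset.mem_coe, Finset.mem_filter, Finset.mem_Icc]
    refine ⟨⟨by omega, by omega⟩, by omega, ?_⟩
    rintro ⟨p, f, hp, hf, heq⟩
    apply hrep
    refine ⟨p, Fin.snoc f q, hp, ?_, ?_⟩
    · intro i
      induction i using Fin.lastCases with
      | last => simpa only [Fin.snoc_last] using hqp
      | cast i => simpa using hf i
    · rw [Fin.sum_univ_castSucc]
      simp only [Fin.snoc_castSucc, Fin.snoc_last]
      omega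
  · intro a ha b hb hab
    rw [Finset.mem_coe] at ha hb
    simp only [Sfin, Finset.mem_filter, Finset.mem_range] at ha hb
    obtain ⟨-, -, -, ha5⟩ := ha
    obtain ⟨-, -, -, hb5⟩ := hb
    simp only at hab
    have : a^5 = b^5 := by omega
    exact Nat.pow_left_injective (by norm_num) this

lemma Scard_lb (x₀ : ℕ) (hx₀ : 2 ≤ x₀) (η : ℝ) (hη : 0 ≤ η) (hη1 : η ≤ 1)
    (hcheb : ∀ x : ℕ, x₀ ≤ x → (x:ℝ)^(1 - η) ≤ (Nat.primeCounting x : ℝ))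
    (N : ℕ) (hN : (2*(x₀:ℝ)) ≤ (N:ℝ)^((1:ℝ)/5)) :
    (1/2) * (N:ℝ)^((1-η)/5) - 1 ≤ ((Sfin N).card : ℝ) := by
  set y : ℝ := (N:ℝ)^((1:ℝ)/5) with hy
  have hy4 : (4:ℝ) ≤ y := by
    have : (4:ℝ) ≤ 2*(x₀:ℝ) := by
      have : (2:ℝ) ≤ (x₀:ℝ) := by exact_mod_cast hx₀
      linarith
    linarith
  set t : ℕ := ⌊(2*(N:ℝ))^((1:ℝ)/5)⌋₊ with ht
  have hNnn : (0:ℝ) ≤ (N:ℝ) := Nat.cast_nonneg N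
  have h2N : (0:ℝ) ≤ 2*(N:ℝ) := by linarith
  have hyle : y ≤ (2*(N:ℝ))^((1:ℝ)/5) :=
    Real.rpow_le_rpow hNnn (by linarith) (by norm_num)
  have htlb : y/2 ≤ (t:ℝ) := by
    have h1 : (2*(N:ℝ))^((1:ℝ)/5) - 1 < (t:ℝ) := Nat.sub_one_lt_floor _
    linarith
  have htx₀ : x₀ ≤ t := by
    have : (x₀:ℝ) ≤ (t:ℝ) := by linarith
    exact_mod_cast this
  have ht5 : t^5 ≤ 2*N := by
    have h1 : (t:ℝ) ≤ (2*(N:ℝ))^((1:ℝ)/5) := Nat.floor_le (by positivity)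
    have h2 : ((t:ℝ))^(5:ℕ) ≤ ((2*(N:ℝ))^((1:ℝ)/5))^(5:ℕ) :=
      pow_le_pow_left₀ (by positivity) h1 5
    have h3 : ((2*(N:ℝ))^((1:ℝ)/5))^(5:ℕ) = 2*(N:ℝ) := by
      rw [← Real.rpow_natCast ((2*(N:ℝ))^((1:ℝ)/5)) 5, ← Real.rpow_mul h2N]
      norm_num
    rw [h3] at h2
    exact_mod_cast h2
  -- the set of odd primes up to t is contained in Sfin N
  set B : Finset ℕ := (Finset.range (t+1)).filter (fun q => q.Prime ∧ q ≠ 2) with hB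
  have hBsub : B ⊆ Sfin N := by
    intro q hq
    simp only [hB, Finset.mem_filter, Finset.mem_range] at hq
    obtain ⟨hqr, hqp, hq2⟩ := hq
    have hqt : q ≤ t := by omega
    have hq5 : q^5 ≤ 2*N := le_trans (Nat.pow_le_pow_left hqt 5) ht5
    have hqodd : q % 2 = 1 := Nat.odd_iff.mp (hqp.odd_of_ne_two hq2)
    have hqq : q ≤ q^5 := Nat.le_self_pow (by norm_num) q
    simp only [Sfin, Finset.mem_filter, Finset.mem_range]
    exact ⟨by omega, hqp, hqodd, hq5⟩
  have hcardA : ((Finset.range (t+1)).filter (fun q => q.Prime)).card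
      = Nat.primeCounting t := by
    have : (Finset.range (t+1)).filter (fun q => q.Prime) = Nat.primesBelow (t+1) := rfl
    rw [this, Nat.primesBelow_card_eq_primeCounting']
    rfl
  have hcardB : Nat.primeCounting t ≤ B.card + 1 := by
    rw [← hcardA]
    have hsub : (Finset.range (t+1)).filter (fun q => q.Prime) ⊆ insert 2 B := by
      intro q hq
      simp only [Finset.mem_filter, Finset.mem_range] at hq
      rcases eq_or_ne q 2 with h | h
      · simp [h]
      · apply Finset.mem_insert_of_mem
        simp only [hB, Finset.mem_filter, Finset.mem_range]
        exact ⟨hq.1, hq.2, h⟩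
    calc ((Finset.range (t+1)).filter (fun q => q.Prime)).card
        ≤ (insert 2 B).card := Finset.card_le_card hsub
      _ ≤ B.card + 1 := Finset.card_insert_le _ _
  have hπ : ((t:ℝ))^(1-η) ≤ (Nat.primeCounting t : ℝ) := hcheb t htx₀
  have hyt : (y/2)^(1-η) ≤ ((t:ℝ))^(1-η) :=
    Real.rpow_le_rpow (by linarith) htlb (by linarith)
  have hy2 : (y/2)^(1-η) ≥ y^(1-η)/2 := by
    rw [Real.div_rpow (by linarith) (by norm_num)]
    apply div_le_div_of_nonneg_left (by positivity) (by positivity)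
    calc (2:ℝ)^(1-η) ≤ (2:ℝ)^(1:ℝ) := Real.rpow_le_rpow_of_exponent_le one_le_two (by linarith)
      _ = 2 := Real.rpow_one 2
  have hyeq : y^(1-η) = (N:ℝ)^((1-η)/5) := by
    rw [hy, ← Real.rpow_mul hNnn]
    ring_nf
  have hcard : (Nat.primeCounting t : ℝ) ≤ (B.card : ℝ) + 1 := by exact_mod_cast hcardB
  have hBS : (B.card : ℝ) ≤ ((Sfin N).card : ℝ) := by
    exact_mod_cast Finset.card_le_card hBsub
  have := hyeq ▸ (le_trans hy2 (le_trans hyt hπ))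
  linarith

end Aux

/-- Final step of the proof: one more prime fifth power, and the exceptional set is finite. -/
theorem step_final
    (hE₃ : ∀ ε : ℝ, 0 < ε → ∃ C : ℝ, 0 < C ∧ ∀ N : ℕ,
      (((Finset.Icc 1 N).filter (fun n => n % 2 = 1 ∧ ¬RepSq16 n)).card : ℝ) ≤
        C * (N : ℝ) ^ ((1 : ℝ) / 5 - 27 / 3200 + ε)) :
    (∀ ε : ℝ, 0 < ε → ∃ C : ℝ, 0 < C ∧ ∀ N : ℕ,
      (((Finset.Ioc (2 * N) (3 * N)).filter (fun n => n % 2 = 0 ∧ ¬RepSq17 n)).card : ℝ) ≤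
        C * (N : ℝ) ^ (-(27 : ℝ) / 3200 + ε)) ∧
      {n : ℕ | n % 2 = 0 ∧ ¬RepSq17 n}.Finite := by
  obtain ⟨C, hC, hCb⟩ := hE₃ ((27:ℝ)/6400) (by norm_num)
  obtain ⟨x₀, hx₀2, hcheb⟩ := cheb ((27:ℝ)/12800) (by norm_num) (by norm_num)
  have hev1 : Filter.Tendsto (fun N:ℕ => (N:ℝ)^((1:ℝ)/5)) Filter.atTop Filter.atTop :=
    (tendsto_rpow_atTop (by norm_num)).comp tendsto_natCast_atTop_atTop
  have hev2 : Filter.Tendsto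
      (fun N:ℕ => (N:ℝ)^((1 - (27:ℝ)/12800)/5 - ((1:ℝ)/5 - 27/6400)))
      Filter.atTop Filter.atTop :=
    (tendsto_rpow_atTop (by norm_num)).comp tendsto_natCast_atTop_atTop
  have hev := ((hev1.eventually_ge_atTop (2*(x₀:ℝ))).and
      ((hev2.eventually_ge_atTop (4*(3*C+1))).and (Filter.eventually_ge_atTop 1)))
  rw [Filter.eventually_atTop] at hev
  obtain ⟨N₀, hN₀⟩ := hev
  -- the exceptional set in `(2N, 3N]` is empty for all `N ≥ N₀`
  have hempty : ∀ N, N₀ ≤ N →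
      (Finset.Ioc (2*N) (3*N)).filter (fun n => n % 2 = 0 ∧ ¬RepSq17 n) = ∅ := by
    intro N hN
    obtain ⟨hE1, hE2, hN1⟩ := hN₀ N hN
    by_contra hne
    obtain ⟨n, hn⟩ := Finset.nonempty_of_ne_empty hne
    rw [Finset.mem_filter] at hn
    have htr := transfer N n hn.1 hn.2.1 hn.2.2
    have hlb := Scard_lb x₀ hx₀2 ((27:ℝ)/12800) (by norm_num) (by norm_num) hcheb N hE1
    have hub := hCb (3*N)
    have hexp : (1:ℝ)/5 - 27/3200 + 27/6400 = (1:ℝ)/5 - 27/6400 := by norm_num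
    rw [hexp] at hub
    have h3N : ((3*N:ℕ):ℝ) = 3*(N:ℝ) := by push_cast; ring
    rw [h3N] at hub
    have hN1r : (1:ℝ) ≤ (N:ℝ) := by exact_mod_cast hN1
    have h3a : (3*(N:ℝ))^((1:ℝ)/5 - 27/6400) ≤ 3 * (N:ℝ)^((1:ℝ)/5 - 27/6400) := by
      rw [Real.mul_rpow (by norm_num) (by positivity)]
      have h1 : (3:ℝ)^((1:ℝ)/5 - 27/6400) ≤ (3:ℝ)^(1:ℝ) :=
        Real.rpow_le_rpow_of_exponent_le (by norm_num) (by norm_num)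
      rw [Real.rpow_one] at h1
      have h2 : (0:ℝ) ≤ (N:ℝ)^((1:ℝ)/5 - 27/6400) := by positivity
      nlinarith
    have htr' : ((Sfin N).card : ℝ) ≤
        (((Finset.Icc 1 (3*N)).filter (fun m => m % 2 = 1 ∧ ¬RepSq16 m)).card : ℝ) := by
      exact_mod_cast htr
    have hNa1 : (1:ℝ) ≤ (N:ℝ)^((1:ℝ)/5 - 27/6400) := by
      calc (1:ℝ) = (N:ℝ)^(0:ℝ) := (Real.rpow_zero _).symm
        _ ≤ _ := Real.rpow_le_rpow_of_exponent_le hN1r (by norm_num)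
    have hNbge : 4*(3*C+1) * (N:ℝ)^((1:ℝ)/5 - 27/6400) ≤ (N:ℝ)^((1 - (27:ℝ)/12800)/5) := by
      have := mul_le_mul_of_nonneg_right hE2
        (le_of_lt (by positivity : (0:ℝ) < (N:ℝ)^((1:ℝ)/5 - 27/6400)))
      rwa [← Real.rpow_add (by linarith)
        ((1 - (27:ℝ)/12800)/5 - ((1:ℝ)/5 - 27/6400)) ((1:ℝ)/5 - 27/6400), sub_add_cancel] at this
    have hCmul := mul_le_mul_of_nonneg_left h3a hC.le
    nlinarith [hlb, htr', hub, hCmul, hNbge, hNa1, hC,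
      mul_le_mul_of_nonneg_left hNa1 hC.le]
  constructor
  · intro ε hε
    refine ⟨(N₀:ℝ)*(N₀:ℝ)^((27:ℝ)/3200) + 1, by positivity, ?_⟩
    intro N
    rcases le_or_gt N₀ N with h | h
    · rw [hempty N h]
      simp only [Finset.card_empty, Nat.cast_zero]
      positivity
    · rcases Nat.eq_zero_or_pos N with h0 | h0
      · subst h0
        simp only [Nat.mul_zero, Finset.Ioc_self, Finset.filter_empty, Finset.card_empty,
          Nat.cast_zero]
        positivity
      · have h1N : (1:ℝ) ≤ (N:ℝ) := by exact_mod_cast h0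
        have hNpos : (0:ℝ) < (N:ℝ) := by linarith
        have hcard : (((Finset.Ioc (2*N) (3*N)).filter
            (fun n => n % 2 = 0 ∧ ¬RepSq17 n)).card : ℝ) ≤ (N:ℝ) := by
          have h1 : ((Finset.Ioc (2*N) (3*N)).filter
              (fun n => n % 2 = 0 ∧ ¬RepSq17 n)).card ≤ (Finset.Ioc (2*N) (3*N)).card :=
            Finset.card_filter_le _ _
          have h2 : (Finset.Ioc (2*N) (3*N)).card = N := by
            rw [Nat.card_Ioc]; omega
          rw [h2] at h1
          exact_mod_cast h1
        have e1 : (N:ℝ)^(-(27:ℝ)/3200) ≤ (N:ℝ)^(-(27:ℝ)/3200 + ε) :=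
          Real.rpow_le_rpow_of_exponent_le h1N (by linarith)
        have e2 : (N:ℝ)*(N:ℝ)^((27:ℝ)/3200) ≤ (N₀:ℝ)*(N₀:ℝ)^((27:ℝ)/3200) := by
          have hNN₀ : (N:ℝ) ≤ (N₀:ℝ) := by exact_mod_cast h.le
          have := Real.rpow_le_rpow (by positivity) hNN₀ (by norm_num : (0:ℝ) ≤ 27/3200)
          have hpn : (0:ℝ) ≤ (N:ℝ)^((27:ℝ)/3200) := by positivity
          nlinarith
        have e3 : (N:ℝ) = ((N:ℝ)*(N:ℝ)^((27:ℝ)/3200)) * (N:ℝ)^(-(27:ℝ)/3200) := by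
          rw [mul_assoc, ← Real.rpow_add hNpos]
          norm_num
        calc (((Finset.Ioc (2*N) (3*N)).filter
              (fun n => n % 2 = 0 ∧ ¬RepSq17 n)).card : ℝ) ≤ (N:ℝ) := hcard
          _ = ((N:ℝ)*(N:ℝ)^((27:ℝ)/3200)) * (N:ℝ)^(-(27:ℝ)/3200) := e3
          _ ≤ ((N₀:ℝ)*(N₀:ℝ)^((27:ℝ)/3200)) * (N:ℝ)^(-(27:ℝ)/3200) :=
              mul_le_mul_of_nonneg_right e2 (by positivity)
          _ ≤ ((N₀:ℝ)*(N₀:ℝ)^((27:ℝ)/3200)) * (N:ℝ)^(-(27:ℝ)/3200 + ε) :=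
              mul_le_mul_of_nonneg_left e1 (by positivity)
          _ ≤ ((N₀:ℝ)*(N₀:ℝ)^((27:ℝ)/3200) + 1) * (N:ℝ)^(-(27:ℝ)/3200 + ε) :=
              mul_le_mul_of_nonneg_right (by linarith) (by positivity)
  · apply Set.Finite.subset (Set.finite_Iic (3*N₀+6))
    intro n hn
    simp only [Set.mem_setOf_eq] at hn
    simp only [Set.mem_Iic]
    by_contra hgt
    push_neg at hgt
    set N := (n+2)/3 with hNdef
    have h1 : N₀ ≤ N ∧ 2*N < n ∧ n ≤ 3*N := by omega
    have hemp := hempty N h1.1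
    have hmem : n ∈ (Finset.Ioc (2*N) (3*N)).filter (fun n => n % 2 = 0 ∧ ¬RepSq17 n) :=
      Finset.mem_filter.mpr ⟨Finset.mem_Ioc.mpr ⟨h1.2.1, h1.2.2⟩, hn⟩
    rw [hemp] at hmem
    exact absurd hmem (Finset.notMem_empty n)
end
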